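/- There exist r₀, t₀ such that for all integers r ≥ r₀ and all real t with t₀ < t ≤ r^{1/3}/100 − 1, the following holds for every realization of the weights: if (i) T(𝐨,u) ≥ f(𝐨,u) − t r^{1/3}, (ii) T(v,𝐫) ≥ f(v,𝐫) − t r^{1/3}, and (iii) there exists an up-right path from u to v with passage time ≥ 4r/3 + 10 t² r^{1/3}, then T(𝐨,𝐫) ≥ 4r + 2 t² r^{1/3}. -/

import Mathlib

set_option maxHeartbeats 1600000


open MeasureTheory ProbabilityTheory

namespace LPP

/-- A configuration of vertex weights on `ℤ²`. -/
abbrev Config := (ℤ × ℤ) → ℝ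

/-- One up-right step on the lattice: exactly one coordinate increases by 1. -/
def UpStep (p q : ℤ × ℤ) : Prop := q = (p.1 + 1, p.2) ∨ q = (p.1, p.2 + 1)

/-- `γ` is an up-right path from `u` to `v`. -/
def IsUpRightPath (γ : List (ℤ × ℤ)) (u v : ℤ × ℤ) : Prop :=
  γ.head? = some u ∧ γ.getLast? = some v ∧ γ.Chain' UpStep

/-- Passage time of a path: the sum of the weights of its vertices except the terminal one. -/
noncomputable def pathTime (ω : Config) (γ : List (ℤ × ℤ)) : ℝ :=
  (γ.dropLast.map ω).sum

/-- Last passage time from `u` to `v`: the maximal passage time over up-right paths. -/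
noncomputable def lpt (ω : Config) (u v : ℤ × ℤ) : ℝ :=
  sSup (pathTime ω '' {γ | IsUpRightPath γ u v})

/-- `γ` is a geodesic from `u` to `v`: an up-right path attaining the last passage time. -/
def IsGeodesic (ω : Config) (γ : List (ℤ × ℤ)) (u v : ℤ × ℤ) : Prop :=
  IsUpRightPath γ u v ∧ pathTime ω γ = lpt ω u v

/-- The family `X` of vertex weights is an i.i.d. family of rate-1 exponential
random variables under the probability measure `P`. -/
def IsIIDExp {Ω : Type*} [MeasurableSpace Ω] (P : Measure Ω) (X : ℤ × ℤ → Ω → ℝ) : Prop :=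
  (∀ u, Measurable (X u)) ∧
    iIndepFun X P ∧
    ∀ u, P.map (X u) = expMeasure 1

/-- `f(u,v) = (√(v₁-u₁) + √(v₂-u₂))²` if `u ⪯ v`, and `0` otherwise. -/
noncomputable def fexp (u v : ℝ × ℝ) : ℝ :=
  if u.1 ≤ v.1 ∧ u.2 ≤ v.2 then (Real.sqrt (v.1 - u.1) + Real.sqrt (v.2 - u.2)) ^ 2 else 0

/-- The function `f` evaluated at lattice points. -/
noncomputable def fZ (u v : ℤ × ℤ) : ℝ := fexp ((u.1 : ℝ), (u.2 : ℝ)) ((v.1 : ℝ), (v.2 : ℝ))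

/-- The point `u = (r/3 - (t+1)r^{2/3}, r/3 + (t+1)r^{2/3})`, rounded to a lattice point. -/
noncomputable def uPt (r : ℕ) (t : ℝ) : ℤ × ℤ :=
  (⌊(r : ℝ) / 3 - (t + 1) * (r : ℝ) ^ ((2 : ℝ) / 3)⌋,
   ⌊(r : ℝ) / 3 + (t + 1) * (r : ℝ) ^ ((2 : ℝ) / 3)⌋)

/-- The point `v = (2r/3 - (t+1)r^{2/3}, 2r/3 + (t+1)r^{2/3})`, rounded to a lattice point. -/
noncomputable def vPt (r : ℕ) (t : ℝ) : ℤ × ℤ :=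
  (⌊2 * (r : ℝ) / 3 - (t + 1) * (r : ℝ) ^ ((2 : ℝ) / 3)⌋,
   ⌊2 * (r : ℝ) / 3 + (t + 1) * (r : ℝ) ^ ((2 : ℝ) / 3)⌋)

lemma UpStep.le {p q : ℤ × ℤ} (h : UpStep p q) : p ≤ q := by
  rcases h with h | h <;> subst h <;> constructor <;> simp

lemma UpStep.lt_sum {p q : ℤ × ℤ} (h : UpStep p q) : p.1 + p.2 < q.1 + q.2 := by
  rcases h with h | h <;> subst h <;> simp

lemma chain'_head_le : ∀ {l : List (ℤ × ℤ)} {a : ℤ × ℤ}, List.Chain' UpStep (a :: l) →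
    ∀ w ∈ a :: l, a ≤ w := by
  intro l
  induction l with
  | nil => intro a _ w hw; simp at hw; subst hw; exact le_refl _
  | cons b l ih =>
    intro a hc w hw
    change List.IsChain _ _ at hc
    rw [List.isChain_cons_cons] at hc
    rcases List.mem_cons.1 hw with rfl | hw
    · exact le_refl _
    · exact le_trans hc.1.le (ih hc.2 w hw)

lemma chain'_le_getLast : ∀ {l : List (ℤ × ℤ)} {a v : ℤ × ℤ}, List.Chain' UpStep (a :: l) →
    (a :: l).getLast? = some v → ∀ w ∈ a :: l, w ≤ v := by
  intro l
  induction l with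
  | nil => intro a v _ hl w hw; simp at hl hw; subst hl; subst hw; exact le_refl _
  | cons b l ih =>
    intro a v hc hl w hw
    change List.IsChain _ _ at hc
    rw [List.isChain_cons_cons] at hc
    have hl' : (b :: l).getLast? = some v := by
      rw [List.getLast?_cons] at hl
      rw [List.getLast?_cons]
      simp only [List.getLast?_cons, Option.getD_some, Option.some.injEq] at hl ⊢
      exact hl
    rcases List.mem_cons.1 hw with rfl | hw
    · exact le_trans hc.1.le (ih hc.2 hl' b List.mem_cons_self)
    · exact ih hc.2 hl' w hw

lemma path_mem_Icc {γ : List (ℤ × ℤ)} {u v : ℤ × ℤ} (h : IsUpRightPath γ u v) :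
    ∀ w ∈ γ, w ∈ Finset.Icc u v := by
  obtain ⟨h1, h2, h3⟩ := h
  intro w hw
  cases γ with
  | nil => simp at h1
  | cons a l =>
    simp only [List.head?_cons, Option.some.injEq] at h1
    subst h1
    rw [Finset.mem_Icc]
    exact ⟨chain'_head_le h3 w hw, chain'_le_getLast h3 h2 w hw⟩

lemma path_nodup {γ : List (ℤ × ℤ)} {u v : ℤ × ℤ} (h : IsUpRightPath γ u v) : γ.Nodup := by
  have hc := h.2.2
  have hc2 : List.Chain' (fun p q : ℤ × ℤ => p.1 + p.2 < q.1 + q.2) γ :=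
    List.IsChain.imp (fun a b hab => hab.lt_sum) hc
  haveI : IsTrans (ℤ × ℤ) (fun p q : ℤ × ℤ => p.1 + p.2 < q.1 + q.2) :=
    ⟨fun a b c h1 h2 => lt_trans h1 h2⟩
  have := List.isChain_iff_pairwise.1 hc2
  exact this.imp (fun {a b} hab => by rintro rfl; exact lt_irrefl _ hab)

lemma path_ne_nil {γ : List (ℤ × ℤ)} {u v : ℤ × ℤ} (h : IsUpRightPath γ u v) : γ ≠ [] := by
  intro hnil; subst hnil; simp [IsUpRightPath] at h

lemma pathTime_le_box {ω : Config} (hω : ∀ w, 0 ≤ ω w) {γ : List (ℤ × ℤ)} {u v : ℤ × ℤ}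
    (h : IsUpRightPath γ u v) : pathTime ω γ ≤ ∑ w ∈ Finset.Icc u v, ω w := by
  have hne := path_ne_nil h
  have key : pathTime ω γ ≤ (γ.map ω).sum := by
    conv_rhs => rw [← List.dropLast_append_getLast hne]
    rw [List.map_append, List.sum_append]
    simp [pathTime]
    exact hω _
  refine le_trans key ?_
  rw [← List.sum_toFinset ω (path_nodup h)]
  refine Finset.sum_le_sum_of_subset_of_nonneg ?_ (fun i _ _ => hω i)
  intro w hw
  exact path_mem_Icc h w (List.mem_toFinset.1 hw)

lemma bddAbove_paths (ω : Config) (hω : ∀ w, 0 ≤ ω w) (u v : ℤ × ℤ) :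
    BddAbove (pathTime ω '' {γ | IsUpRightPath γ u v}) := by
  refine ⟨∑ w ∈ Finset.Icc u v, ω w, ?_⟩
  rintro x ⟨γ, hγ, rfl⟩
  exact pathTime_le_box hω hγ

lemma pathTime_le_lpt {ω : Config} (hω : ∀ w, 0 ≤ ω w) {γ : List (ℤ × ℤ)} {u v : ℤ × ℤ}
    (h : IsUpRightPath γ u v) : pathTime ω γ ≤ lpt ω u v :=
  le_csSup (bddAbove_paths ω hω u v) ⟨γ, h, rfl⟩

lemma exists_path_aux : ∀ n : ℕ, ∀ u v : ℤ × ℤ, u.1 ≤ v.1 → u.2 ≤ v.2 →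
    v.1 + v.2 - u.1 - u.2 = n → ∃ γ, IsUpRightPath γ u v := by
  intro n
  induction n with
  | zero =>
    intro u v h1 h2 h0
    have : u = v := by
      have : u.1 = v.1 ∧ u.2 = v.2 := by omega
      exact Prod.ext this.1 this.2
    subst this
    exact ⟨[u], by simp [IsUpRightPath]; exact List.isChain_singleton u⟩
  | succ n ih =>
    intro u v h1 h2 h0
    rcases lt_or_eq_of_le h1 with hlt | heq
    · obtain ⟨γ, hh, hl, hc⟩ := ih (u.1 + 1, u.2) v (by omega) h2 (by simp; omega)
      refine ⟨u :: γ, by simp [IsUpRightPath], ?_, ?_⟩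
      · cases γ with
        | nil => simp [IsUpRightPath] at hh
        | cons a l =>
          simp only [List.getLast?_cons] at hl ⊢
          exact hl
      · show List.IsChain _ _
        rw [List.isChain_cons]
        refine ⟨?_, hc⟩
        intro y hy
        rw [hh] at hy
        simp at hy
        subst hy
        exact Or.inl rfl
    · have hlt2 : u.2 < v.2 := by omega
      obtain ⟨γ, hh, hl, hc⟩ := ih (u.1, u.2 + 1) v (by simp; omega) (by simp; omega) (by simp; omega)
      refine ⟨u :: γ, by simp [IsUpRightPath], ?_, ?_⟩
      · cases γ with
        | nil => simp [IsUpRightPath] at hh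
        | cons a l =>
          simp only [List.getLast?_cons] at hl ⊢
          exact hl
      · show List.IsChain _ _
        rw [List.isChain_cons]
        refine ⟨?_, hc⟩
        intro y hy
        rw [hh] at hy
        simp at hy
        subst hy
        exact Or.inr rfl

lemma exists_path {u v : ℤ × ℤ} (h1 : u.1 ≤ v.1) (h2 : u.2 ≤ v.2) :
    ∃ γ, IsUpRightPath γ u v :=
  exists_path_aux (v.1 + v.2 - u.1 - u.2).toNat u v h1 h2 (by omega)

lemma concat_path {γ₁ γ₂ : List (ℤ × ℤ)} {u m v : ℤ × ℤ} (ω : Config)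
    (h₁ : IsUpRightPath γ₁ u m) (h₂ : IsUpRightPath γ₂ m v) :
    IsUpRightPath (γ₁ ++ γ₂.tail) u v ∧
      pathTime ω (γ₁ ++ γ₂.tail) = pathTime ω γ₁ + pathTime ω γ₂ := by
  obtain ⟨h1h, h1l, h1c⟩ := h₁
  obtain ⟨h2h, h2l, h2c⟩ := h₂
  cases γ₂ with
  | nil => simp at h2h
  | cons m' l =>
    simp only [List.head?_cons, Option.some.injEq] at h2h
    subst h2h
    cases l with
    | nil =>
      simp only [List.getLast?_cons, List.getLast?_nil, Option.getD_none,
        Option.some.injEq] at h2l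
      subst h2l
      simp only [List.tail_cons, List.append_nil]
      exact ⟨⟨h1h, h1l, h1c⟩, by simp [pathTime]⟩
    | cons b l' =>
      have hγ₁ne : γ₁ ≠ [] := by intro h; subst h; simp at h1h
      have hstep : UpStep m' b := (List.isChain_cons_cons.1 h2c).1
      have hcb : List.Chain' UpStep (b :: l') := (List.isChain_cons_cons.1 h2c).2
      constructor
      · refine ⟨?_, ?_, ?_⟩
        · rw [List.head?_append]; rw [h1h]; rfl
        · simp only [List.tail_cons]
          rw [List.getLast?_append_of_ne_nil _ (by simp : (b :: l') ≠ [])]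
          simp only [List.getLast?_cons] at h2l ⊢
          exact h2l
        · refine List.IsChain.append h1c hcb ?_
          intro x hx y hy
          rw [h1l] at hx
          simp at hx hy
          subst hx; subst hy
          exact hstep
      · simp only [List.tail_cons]
        rw [pathTime, List.dropLast_append_of_ne_nil (by simp : (b :: l') ≠ [])]
        rw [List.map_append, List.sum_append]
        have e1 : (γ₁.map ω).sum = pathTime ω γ₁ + ω m' := by
          conv_lhs => rw [← List.dropLast_append_getLast hγ₁ne]
          have : γ₁.getLast hγ₁ne = m' := by
            rw [List.getLast?_eq_getLast hγ₁ne] at h1l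
            simpa using h1l
          rw [this, List.map_append, List.sum_append]
          simp [pathTime]
        have e2 : pathTime ω (m' :: b :: l') = ω m' + ((b :: l').dropLast.map ω).sum := by
          simp [pathTime]
        rw [e1, e2]; ring

lemma lpt_superadd (ω : Config) (hω : ∀ w, 0 ≤ ω w) {p q s w : ℤ × ℤ} {γ : List (ℤ × ℤ)}
    (hpq : ∃ γ', IsUpRightPath γ' p q) (hγ : IsUpRightPath γ q s)
    (hsw : ∃ γ', IsUpRightPath γ' s w) :
    lpt ω p q + pathTime ω γ + lpt ω s w ≤ lpt ω p w := by
  refine le_of_forall_pos_le_add ?_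
  intro ε hε
  obtain ⟨γ₀, hγ₀⟩ := hpq
  obtain ⟨γ₄, hγ₄⟩ := hsw
  have hne1 : (pathTime ω '' {g | IsUpRightPath g p q}).Nonempty := ⟨_, γ₀, hγ₀, rfl⟩
  have hne3 : (pathTime ω '' {g | IsUpRightPath g s w}).Nonempty := ⟨_, γ₄, hγ₄, rfl⟩
  obtain ⟨x₁, ⟨γ₁, hγ₁, rfl⟩, hx₁⟩ :=
    exists_lt_of_lt_csSup hne1 (show lpt ω p q - ε/2 < sSup _ from by
      have : lpt ω p q - ε/2 < lpt ω p q := by linarith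
      exact this)
  obtain ⟨x₃, ⟨γ₃, hγ₃, rfl⟩, hx₃⟩ :=
    exists_lt_of_lt_csSup hne3 (show lpt ω s w - ε/2 < sSup _ from by
      have : lpt ω s w - ε/2 < lpt ω s w := by linarith
      exact this)
  have c1 := concat_path ω hγ hγ₃
  have c2 := concat_path ω hγ₁ c1.1
  have hle := pathTime_le_lpt hω c2.1
  rw [c2.2, c1.2] at hle
  linarith

lemma sqrt_lb {a b : ℝ} (ha : 0 ≤ a) (hab : 2 * a ≤ b) :
    b - a ^ 2 / (2 * b) - a ^ 4 / b ^ 3 ≤ Real.sqrt (b ^ 2 - a ^ 2) := by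
  rcases eq_or_lt_of_le (le_trans (by linarith) hab : (0:ℝ) ≤ b) with hb | hb
  · have ha0 : a = 0 := by linarith
    subst ha0; rw [← hb]; norm_num
  set s := Real.sqrt (b ^ 2 - a ^ 2) with hs
  have hnn : (0:ℝ) ≤ b ^ 2 - a ^ 2 := by nlinarith
  have hs0 : 0 ≤ s := Real.sqrt_nonneg _
  have hs2 : s ^ 2 = b ^ 2 - a ^ 2 := Real.sq_sqrt hnn
  have h1 : (a^2*b^3 + 2*b*a^4)/(2*b^4) = a^2/(2*b) + a^4/b^3 := by
    field_simp
  have h2 : b - s ≤ (a^2*b^3 + 2*b*a^4)/(2*b^4) := by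
    rw [le_div_iff₀ (by positivity)]
    have h4 : 4*a^2 ≤ b^2 := by
      nlinarith [mul_nonneg (sub_nonneg.2 hab) (by linarith : (0:ℝ) ≤ b + 2*a)]
    have hfac : (0:ℝ) ≤ 7*b^4 - 4*a^2*b^2 - 4*a^4 := by
      nlinarith [mul_le_mul_of_nonneg_right h4 (sq_nonneg b), mul_le_mul_of_nonneg_right h4 (sq_nonneg a)]
    have hP : 0 ≤ 4*s^2*b^8 - (2*b^5 - a^2*b^3 - 2*a^4*b)^2 := by
      have : 4*s^2*b^8 - (2*b^5 - a^2*b^3 - 2*a^4*b)^2 = a^4*b^2*(7*b^4 - 4*a^2*b^2 - 4*a^4) := by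
        rw [hs2]; ring
      rw [this]
      positivity
    nlinarith [mul_nonneg hs0 (pow_nonneg (le_of_lt hb) 4), hP]
  linarith [h1 ▸ h2]

lemma side_bound {R t A b x y : ℝ} (hR : 1000 ≤ R) (ht : 0 < t)
    (hA : A = (t+1)*R^2) (htR : t + 1 ≤ R/100)
    (hb : (20/61)*R^3 ≤ b) (hb' : b ≤ R^3/3)
    (hx : b - A ≤ x) (hy : b + A ≤ y) :
    4*b - (13/4)*(t+1)^2*R ≤ (Real.sqrt x + Real.sqrt y)^2 := by
  have hR0 : (0:ℝ) < R := by linarith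
  have ht1 : (0:ℝ) < t + 1 := by linarith
  have hA0 : 0 ≤ A := by rw [hA]; positivity
  have hR3 : (0:ℝ) < R^3 := by positivity
  have hA100 : A ≤ R^3/100 := by
    rw [hA]
    calc (t+1)*R^2 ≤ (R/100)*R^2 := mul_le_mul_of_nonneg_right htR (sq_nonneg R)
      _ = R^3/100 := by ring
  have hAb : 2*A ≤ b := by
    have h2 : R^3/50 ≤ (20/61)*R^3 := by linarith
    linarith
  have hx0 : (0:ℝ) ≤ b - A := by linarith
  have hy0 : (0:ℝ) ≤ b + A := by linarith
  have hsx : Real.sqrt (b - A) ≤ Real.sqrt x := Real.sqrt_le_sqrt hx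
  have hsy : Real.sqrt (b + A) ≤ Real.sqrt y := Real.sqrt_le_sqrt hy
  have hmono : (Real.sqrt (b-A) + Real.sqrt (b+A))^2 ≤ (Real.sqrt x + Real.sqrt y)^2 :=
    pow_le_pow_left₀ (by positivity) (by linarith) 2
  have hprod : Real.sqrt (b-A) * Real.sqrt (b+A) = Real.sqrt (b^2 - A^2) := by
    rw [← Real.sqrt_mul hx0]
    congr 1
    ring
  have hexp : (Real.sqrt (b-A) + Real.sqrt (b+A))^2 = 2*b + 2*Real.sqrt (b^2 - A^2) := by
    rw [add_sq, Real.sq_sqrt hx0, Real.sq_sqrt hy0, mul_assoc, hprod]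
    ring
  have hsq := sqrt_lb hA0 hAb
  have hb0 : (0:ℝ) < b := by linarith
  have step5 : A^2/(2*b) ≤ (61/40)*(t+1)^2*R := by
    rw [div_le_iff₀ (by positivity)]
    have hAe : A^2 = (t+1)^2*R^4 := by rw [hA]; ring
    rw [hAe]
    have h1 := mul_le_mul_of_nonneg_left hb (by positivity : (0:ℝ) ≤ (61/20)*(t+1)^2*R)
    calc (t+1)^2*R^4 = (61/20)*(t+1)^2*R*((20/61)*R^3) := by ring
      _ ≤ (61/20)*(t+1)^2*R*b := h1
      _ = (61/40)*(t+1)^2*R*(2*b) := by ring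
  have step6 : A^4/b^3 ≤ (1/10)*(t+1)^2*R := by
    rw [div_le_iff₀ (by positivity)]
    have hA4 : A^4 = (t+1)^4*R^8 := by rw [hA]; ring
    have hb3 : ((20/61)*R^3)^3 ≤ b^3 := pow_le_pow_left₀ (by positivity) hb 3
    have ht2 : (t+1)^2 ≤ (R/100)^2 := pow_le_pow_left₀ (by positivity) htR 2
    rw [hA4]
    have key : (t+1)^4*R^8 ≤ (t+1)^2*(R/100)^2*R^8 := by
      have he : (t+1)^4 = (t+1)^2*(t+1)^2 := by ring
      rw [he]
      have h2 := mul_le_mul_of_nonneg_left ht2 (sq_nonneg (t+1))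
      have h3 : (0:ℝ) ≤ R^8 := by positivity
      nlinarith [h2, h3]
    refine le_trans key ?_
    calc (t+1)^2*(R/100)^2*R^8 = ((t+1)^2*R) * (R^9/10000) := by ring
      _ ≤ ((t+1)^2*R) * (((20/61)*R^3)^3/10) := by
          refine mul_le_mul_of_nonneg_left ?_ (by positivity)
          nlinarith [pow_nonneg (le_of_lt hR0) 9]
      _ ≤ ((t+1)^2*R) * (b^3/10) := mul_le_mul_of_nonneg_left (by linarith) (by positivity)
      _ = 1/10*(t+1)^2*R*b^3 := by ring
  linarith [hmono, hexp, hsq, step5, step6]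


theorem concatenation_estimate :
    ∃ r₀ t₀ : ℝ, 0 < r₀ ∧ 0 < t₀ ∧
      ∀ r : ℕ, r₀ ≤ (r : ℝ) → ∀ t : ℝ, t₀ < t → t ≤ (r : ℝ) ^ ((1 : ℝ) / 3) / 100 - 1 →
        ∀ ω : Config, (∀ w, 0 ≤ ω w) →
          lpt ω (0, 0) (uPt r t) ≥ fZ (0, 0) (uPt r t) - t * (r : ℝ) ^ ((1 : ℝ) / 3) →
          lpt ω (vPt r t) ((r : ℤ), (r : ℤ)) ≥
            fZ (vPt r t) ((r : ℤ), (r : ℤ)) - t * (r : ℝ) ^ ((1 : ℝ) / 3) →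
          (∃ γ, IsUpRightPath γ (uPt r t) (vPt r t) ∧
            pathTime ω γ ≥ 4 * (r : ℝ) / 3 + 10 * t ^ 2 * (r : ℝ) ^ ((1 : ℝ) / 3)) →
          lpt ω (0, 0) ((r : ℤ), (r : ℤ)) ≥ 4 * (r : ℝ) + 2 * t ^ 2 * (r : ℝ) ^ ((1 : ℝ) / 3) := by
  refine ⟨10^9, 100, by norm_num, by norm_num, ?_⟩
  intro r hr t ht ht' ω hω H1 H2 hpath
  obtain ⟨γ, hγ, hγt⟩ := hpath
  set R : ℝ := (r : ℝ) ^ ((1 : ℝ) / 3) with hRdef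
  have hr9 : (10:ℝ)^9 ≤ (r:ℝ) := by exact_mod_cast hr
  have hrpos : (0:ℝ) < r := by linarith
  have hR0 : 0 < R := Real.rpow_pos_of_pos hrpos _
  have hR3 : R^3 = (r:ℝ) := by
    rw [hRdef, ← Real.rpow_natCast ((r:ℝ) ^ ((1:ℝ)/3)) 3, ← Real.rpow_mul hrpos.le]
    norm_num
  have hR2 : (r:ℝ) ^ ((2:ℝ)/3) = R^2 := by
    rw [hRdef, ← Real.rpow_natCast ((r:ℝ) ^ ((1:ℝ)/3)) 2, ← Real.rpow_mul hrpos.le]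
    norm_num
  have hR1000 : (1000:ℝ) ≤ R := by
    by_contra h
    push_neg at h
    have h2 : R^3 < 1000^3 := pow_lt_pow_left₀ h hR0.le (by norm_num)
    rw [hR3] at h2
    norm_num at h2
    linarith
  have ht100 : (100:ℝ) < t := ht
  have ht0 : (0:ℝ) < t := by linarith
  have htR : t + 1 ≤ R/100 := by rw [hRdef]; linarith
  set A : ℝ := (t + 1) * (r:ℝ) ^ ((2:ℝ)/3) with hAdef
  have hA : A = (t+1)*R^2 := by rw [hAdef, hR2]
  have hA0 : 0 ≤ A := by rw [hA]; positivity
  have hbig : (10:ℝ)^9 ≤ R^3 := by rw [hR3]; exact hr9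
  have hA100 : A ≤ R^3/100 := by
    rw [hA]
    calc (t+1)*R^2 ≤ (R/100)*R^2 := mul_le_mul_of_nonneg_right htR (sq_nonneg R)
      _ = R^3/100 := by ring
  have hrR : (r:ℝ) = R^3 := hR3.symm
  -- coordinates
  have hu1 : ((uPt r t).1 : ℝ) = (⌊(r:ℝ)/3 - A⌋ : ℤ) := by rw [uPt, hAdef]
  have hu2 : ((uPt r t).2 : ℝ) = (⌊(r:ℝ)/3 + A⌋ : ℤ) := by rw [uPt, hAdef]
  have hv1 : ((vPt r t).1 : ℝ) = (⌊2*(r:ℝ)/3 - A⌋ : ℤ) := by rw [vPt, hAdef]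
  have hv2 : ((vPt r t).2 : ℝ) = (⌊2*(r:ℝ)/3 + A⌋ : ℤ) := by rw [vPt, hAdef]
  have hu1lb : R^3/3 - A - 1 ≤ ((uPt r t).1 : ℝ) := by
    rw [hu1, ← hrR]
    exact le_of_lt (Int.sub_one_lt_floor _)
  have hu2lb : R^3/3 + A - 1 ≤ ((uPt r t).2 : ℝ) := by
    rw [hu2, ← hrR]
    exact le_of_lt (Int.sub_one_lt_floor _)
  have hv1ub : ((vPt r t).1 : ℝ) ≤ 2*R^3/3 - A := by
    rw [hv1, ← hrR]
    exact le_trans (Int.floor_le _) (by linarith)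
  have hv2ub : ((vPt r t).2 : ℝ) ≤ 2*R^3/3 + A := by
    rw [hv2, ← hrR]
    exact le_trans (Int.floor_le _) (by linarith)
  -- positivity / order facts
  have hu1pos : (0:ℝ) ≤ ((uPt r t).1 : ℝ) := by linarith
  have hu2pos : (0:ℝ) ≤ ((uPt r t).2 : ℝ) := by linarith
  have hv1r : ((vPt r t).1 : ℝ) ≤ (r:ℝ) := by rw [hrR]; linarith
  have hv2r : ((vPt r t).2 : ℝ) ≤ (r:ℝ) := by rw [hrR]; linarith
  have hiu1 : (0:ℤ) ≤ (uPt r t).1 := by exact_mod_cast hu1pos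
  have hiu2 : (0:ℤ) ≤ (uPt r t).2 := by exact_mod_cast hu2pos
  have hiv1 : (vPt r t).1 ≤ (r:ℤ) := by exact_mod_cast hv1r
  have hiv2 : (vPt r t).2 ≤ (r:ℤ) := by exact_mod_cast hv2r
  -- superadditivity
  have hsuper : lpt ω (0,0) (uPt r t) + pathTime ω γ + lpt ω (vPt r t) ((r:ℤ),(r:ℤ))
      ≤ lpt ω (0,0) ((r:ℤ),(r:ℤ)) := by
    refine lpt_superadd ω hω ?_ hγ ?_
    · exact exists_path (u := ((0:ℤ),(0:ℤ))) (v := uPt r t) hiu1 hiu2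
    · exact exists_path (u := vPt r t) (v := ((r:ℤ),(r:ℤ))) hiv1 hiv2
  -- fZ lower bounds
  have hF1 : 4*(R^3/3 - 1) - (13/4)*(t+1)^2*R ≤ fZ (0,0) (uPt r t) := by
    have hcond : (((0:ℤ),(0:ℤ)).1 : ℝ) ≤ ((uPt r t).1 : ℝ) ∧
        (((0:ℤ),(0:ℤ)).2 : ℝ) ≤ ((uPt r t).2 : ℝ) := by
      constructor <;> simpa using (by assumption)
    rw [fZ, fexp, if_pos hcond]
    simp only [Int.cast_zero, sub_zero]
    refine side_bound hR1000 ht0 hA htR ?_ ?_ ?_ ?_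
    · linarith
    · linarith
    · linarith
    · linarith
  have hF2 : 4*(R^3/3) - (13/4)*(t+1)^2*R ≤ fZ (vPt r t) ((r:ℤ),(r:ℤ)) := by
    have hcond : ((vPt r t).1 : ℝ) ≤ (((r:ℤ),(r:ℤ)).1 : ℝ) ∧
        ((vPt r t).2 : ℝ) ≤ (((r:ℤ),(r:ℤ)).2 : ℝ) := by
      constructor <;> (push_cast; assumption)
    rw [fZ, fexp, if_pos hcond]
    rw [add_comm (Real.sqrt _)]
    refine side_bound hR1000 ht0 hA htR ?_ ?_ ?_ ?_
    · linarith
    · linarith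
    · -- R^3/3 - A ≤ r - v2
      push_cast
      rw [hrR]
      linarith
    · push_cast
      rw [hrR]
      linarith
  -- final arithmetic
  rw [ge_iff_le, hrR]
  rw [hrR] at hγt
  have hγt' : 4*R^3/3 + 10*t^2*R ≤ pathTime ω γ := hγt
  have hH1 : fZ (0,0) (uPt r t) - t*R ≤ lpt ω (0,0) (uPt r t) := H1
  have hH2 : fZ (vPt r t) ((r:ℤ),(r:ℤ)) - t*R ≤ lpt ω (vPt r t) ((r:ℤ),(r:ℤ)) := H2
  have hkey : (2:ℝ) ≤ 8*t^2 - (13/2)*(t+1)^2 - 2*t := by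
    nlinarith [mul_nonneg (by linarith : (0:ℝ) ≤ t - 100) (by linarith : (0:ℝ) ≤ t)]
  have hkeyR := mul_le_mul_of_nonneg_right hkey hR0.le
  have hfinal : 4*R^3 + 2*t^2*R ≤ (4*(R^3/3 - 1) - (13/4)*(t+1)^2*R - t*R)
      + (4*R^3/3 + 10*t^2*R) + (4*(R^3/3) - (13/4)*(t+1)^2*R - t*R) := by
    have hexpand : (8*t^2 - (13/2)*(t+1)^2 - 2*t)*R
        = 8*t^2*R - (13/2)*(t+1)^2*R - 2*t*R := by ring
    rw [hexpand] at hkeyR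
    have h2R : (2000:ℝ) ≤ 2*R := by linarith
    linarith
  linarith


end LPP
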